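/- Let $X_1, X_2$ be unit vectors with $X_1^TX_2 = -\hat\rho \in (0,1)$, $\hat\varphi^2 = 1-\hat\rho$, and $X_3 = C(X_1+X_2)/2 + U$ where $C > 1$, $C^2\hat\varphi^2/2 < 1$, and $U^T(X_1,X_2) = 0$. Set $\hat\tau^2 = 1 - C^2\hat\varphi^2/2$ (so $\|X_3\|_2 = 1$ requires $\|U\|_2^2 = \hat\tau^2$). Then the compatibility constant for $S_0 = \{1,2\}$ is $\hat\phi^2(S_0) = \hat\varphi^2\hat\tau^2$, equivalently the effective sparsity is $2/\hat\phi^2(S_0) = 2/\hat\varphi^2 + C^2/\hat\tau^2$. -/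
import Mathlib

set_option maxHeartbeats 1000000


open scoped RealInnerProductSpace

/-- compatibility constant for s₀ = 2, m₀ = 1 with
X₃ = C(X₁+X₂)/2 + U. -/
theorem stmt13 (n : ℕ) (X1 X2 X3 U : EuclideanSpace ℝ (Fin n)) (ρ C : ℝ)
    (h1 : ‖X1‖ = 1) (h2 : ‖X2‖ = 1) (hρ : ⟪X1, X2⟫ = -ρ)
    (hρ0 : 0 < ρ) (hρ1 : ρ < 1)
    (hX3 : X3 = (C / 2) • (X1 + X2) + U)
    (hU1 : ⟪U, X1⟫ = 0) (hU2 : ⟪U, X2⟫ = 0)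
    (hC : 1 < C) (hC2 : C ^ 2 * (1 - ρ) / 2 < 1)
    (hUnorm : ‖U‖ ^ 2 = 1 - C ^ 2 * (1 - ρ) / 2) :
    IsLeast {t : ℝ | ∃ b1 b2 b3 : ℝ, |b1| + |b2| = 1 ∧ |b3| ≤ 1 ∧
        t = 2 * ‖b1 • X1 + b2 • X2 - b3 • X3‖ ^ 2}
      ((1 - ρ) * (1 - C ^ 2 * (1 - ρ) / 2)) ∧
    2 / ((1 - ρ) * (1 - C ^ 2 * (1 - ρ) / 2))
      = 2 / (1 - ρ) + C ^ 2 / (1 - C ^ 2 * (1 - ρ) / 2) := by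
  have hp : (0:ℝ) < 1 - ρ := by linarith
  have ht : (0:ℝ) < 1 - C ^ 2 * (1 - ρ) / 2 := by linarith
  have hC0 : (0:ℝ) < C := by linarith
  have e11 : ⟪X1, X1⟫ = 1 := by
    rw [real_inner_self_eq_norm_sq, h1]; norm_num
  have e22 : ⟪X2, X2⟫ = 1 := by
    rw [real_inner_self_eq_norm_sq, h2]; norm_num
  have e21 : ⟪X2, X1⟫ = -ρ := by rw [real_inner_comm]; exact hρ
  have e1U : ⟪X1, U⟫ = 0 := by rw [real_inner_comm]; exact hU1
  have e2U : ⟪X2, U⟫ = 0 := by rw [real_inner_comm]; exact hU2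
  have eUU : ⟪U, U⟫ = 1 - C ^ 2 * (1 - ρ) / 2 := by
    rw [real_inner_self_eq_norm_sq, hUnorm]
  have hnorm : ∀ b1 b2 b3 : ℝ, ‖b1 • X1 + b2 • X2 - b3 • X3‖ ^ 2
      = b1^2 + b2^2 - 2*ρ*b1*b2 - C*(1-ρ)*(b1+b2)*b3 + b3^2 := by
    intro b1 b2 b3
    rw [← real_inner_self_eq_norm_sq, hX3]
    simp only [inner_sub_left, inner_sub_right, inner_add_left, inner_add_right,
      real_inner_smul_left, real_inner_smul_right, e11, e22, hρ, e21, hU1, hU2,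
      e1U, e2U, eUU]
    ring
  refine ⟨⟨⟨1/2, 1/2, C*(1-ρ)/2, ?_, ?_, ?_⟩, ?_⟩, ?_⟩
  · rw [show |(1:ℝ)/2| = 1/2 from abs_of_pos (by norm_num)]; norm_num
  · have h1 : 0 < C*(1-ρ)/2 := by positivity
    have h2 : C*(1-ρ)/2 * C < 1 := by nlinarith
    rw [abs_of_pos h1]
    nlinarith
  · rw [hnorm]; ring
  · rintro t ⟨b1, b2, b3, hb, hb3, rfl⟩
    rw [hnorm]
    have hs : (b1+b2)^2 ≤ 1 := by
      have := abs_add_le b1 b2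
      rw [hb] at this
      nlinarith [abs_nonneg (b1+b2), sq_abs (b1+b2)]
    have hd : 1 - (b1+b2)^2 ≤ (b1-b2)^2 := by
      have hb2 : (|b1|+|b2|)^2 = 1 := by rw [hb]; norm_num
      nlinarith [hb2, sq_abs b1, sq_abs b2, sq_nonneg (|b1|-|b2|), le_abs_self (b1*b2)]
    have hpt : (1-ρ) * (1 - C ^ 2 * (1 - ρ) / 2) ≤ 1 + ρ := by
      have h4 : (1-ρ) * (1 - C ^ 2 * (1 - ρ) / 2) ≤ 1 * 1 :=
        mul_le_mul (by linarith) (by nlinarith [sq_nonneg C]) ht.le (by norm_num)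
      linarith
    have key : 2 * (b1^2 + b2^2 - 2*ρ*b1*b2 - C*(1-ρ)*(b1+b2)*b3 + b3^2)
        = (1-ρ) * (1 - C ^ 2 * (1 - ρ) / 2) * (b1+b2)^2
          + (1+ρ) * (b1-b2)^2 + 2 * (b3 - C*(1-ρ)*(b1+b2)/2)^2 := by ring
    rw [key]
    nlinarith [sq_nonneg (b3 - C*(1-ρ)*(b1+b2)/2),
      mul_nonneg (by linarith : (0:ℝ) ≤ 1 + ρ - (1-ρ) * (1 - C ^ 2 * (1 - ρ) / 2))
        (by linarith : (0:ℝ) ≤ 1 - (b1+b2)^2),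
      mul_nonneg (by linarith : (0:ℝ) ≤ 1 + ρ)
        (by linarith : (0:ℝ) ≤ (b1-b2)^2 - (1 - (b1+b2)^2))]
  · rw [div_add_div _ _ hp.ne' ht.ne',
      show 2 * (1 - C ^ 2 * (1 - ρ) / 2) + (1 - ρ) * C ^ 2 = 2 by ring]
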